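/- For all integers m ≥ 2, r ≥ 2 and every i with 1 ≤ i ≤ r, the number (m·i)/gcd(m·i, r) divides α_{m,r}(i). In particular, m/gcd(m, r) divides α_{m,r}(i) for all such i. -/

import Mathlib

open Finset Polynomial

private lemma rchooseAux (a r : ℕ) (hr : 1 ≤ r) :
    (r : ℤ) * (a.choose r) = (a : ℤ) * ((a - 1).choose (r - 1)) := by
  cases a with
  | zero =>
    simp [Nat.choose_eq_zero_of_lt (show 0 < r by omega)]
  | succ a =>
    obtain ⟨s, rfl⟩ : ∃ s, r = s + 1 := ⟨r - 1, by omega⟩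
    have h := Nat.add_one_mul_choose_eq a s
    have h2 : (s + 1) * (a + 1).choose (s + 1) = (a + 1) * a.choose s := by
      rw [mul_comm]; exact h.symm
    simp only [Nat.add_sub_cancel]
    exact_mod_cast h2

private lemma innerSumAux (i j : ℕ) :
    ∑ k ∈ range (i + 1), (-1 : ℤ) ^ (i - k) * (i.choose k) * (k.choose j)
      = if j = i then 1 else 0 := by
  rcases le_or_gt j i with hj | hj
  · have hsub : Ico j (i + 1) ⊆ range (i + 1) := by
      intro x hx; simp only [mem_Ico, mem_range] at *; omega
    rw [← Finset.sum_subset hsub (by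
      intro x hx hx'
      simp only [mem_Ico, mem_range] at hx hx'
      have : x < j := by omega
      rw [Nat.choose_eq_zero_of_lt this]; ring)]
    rw [Finset.sum_Ico_eq_sum_range]
    have hij : i + 1 - j = (i - j) + 1 := by omega
    rw [hij]
    set n := i - j with hn
    have : ∀ t ∈ range (n + 1),
        (-1 : ℤ) ^ (i - (j + t)) * (i.choose (j + t)) * ((j + t).choose j)
          = ((i.choose j : ℤ) * (-1) ^ n) * ((-1) ^ t * (n.choose t)) := by
      intro t ht
      simp only [mem_range] at ht
      have htn : t ≤ n := by omega
      have hc := Nat.choose_mul (n := i) (show j ≤ j + t by omega)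
      have hc' : (i.choose (j + t) : ℤ) * ((j + t).choose j) = (i.choose j : ℤ) * (n.choose t) := by
        have : (j + t) - j = t := by omega
        rw [this, ← hn] at hc
        exact_mod_cast congrArg (Nat.cast (R := ℤ)) hc
      have hpow : (-1 : ℤ) ^ (i - (j + t)) = (-1) ^ n * (-1) ^ t := by
        have h1 : i - (j + t) = n - t := by omega
        have h2 : (-1 : ℤ) ^ (n - t) * (-1) ^ t = (-1) ^ n := by
          rw [← pow_add, Nat.sub_add_cancel htn]
        have h3 : ((-1 : ℤ) ^ t) * ((-1) ^ t) = 1 := by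
          rw [← pow_add]; exact Even.neg_one_pow ⟨t, by omega⟩
        calc (-1 : ℤ) ^ (i - (j + t)) = (-1) ^ (n - t) * 1 := by rw [h1, mul_one]
          _ = (-1) ^ (n - t) * ((-1) ^ t * (-1) ^ t) := by rw [h3]
          _ = ((-1) ^ (n - t) * (-1) ^ t) * (-1) ^ t := by ring
          _ = (-1) ^ n * (-1) ^ t := by rw [h2]
      calc (-1 : ℤ) ^ (i - (j + t)) * (i.choose (j + t)) * ((j + t).choose j)
          = (-1 : ℤ) ^ (i - (j + t)) * ((i.choose (j + t) : ℤ) * ((j + t).choose j)) := by ring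
        _ = ((-1) ^ n * (-1) ^ t) * ((i.choose j : ℤ) * (n.choose t)) := by rw [hpow, hc']
        _ = ((i.choose j : ℤ) * (-1) ^ n) * ((-1) ^ t * (n.choose t)) := by ring
    rw [Finset.sum_congr rfl this, ← Finset.mul_sum, Int.alternating_sum_range_choose]
    rcases eq_or_lt_of_le hj with rfl | hlt
    · simp [hn]
    · have hn0 : n ≠ 0 := by omega
      rw [if_neg hn0, if_neg (by omega : ¬ j = i)]
      ring
  · rw [if_neg (by omega)]
    apply Finset.sum_eq_zero
    intro k hk
    simp only [mem_range] at hk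
    rw [Nat.choose_eq_zero_of_lt (by omega : k < j)]
    ring

private lemma keyNegAux (m r : ℕ) (hm : 1 ≤ m) (hr : 1 ≤ r) (α : ℕ → ℤ)
    (hα : ∀ n : ℕ, 1 ≤ n →
      ((m * n + r - 1).choose r : ℤ) =
        ∑ j ∈ Finset.Icc 1 r, α j * ((n + j - 1).choose j)) :
    ∀ k : ℕ, ((-1 : ℤ)) ^ r * ((m * k).choose r : ℤ)
      = ∑ j ∈ Finset.Icc 1 r, α j * (-1 : ℤ) ^ j * (k.choose j) := by
  set p : ℚ[X] := C ((r.factorial : ℚ)⁻¹) * (ascPochhammer ℚ r).comp (C (m : ℚ) * X) with hp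
  set q : ℚ[X] := ∑ j ∈ Finset.Icc 1 r, C ((α j : ℚ) * (j.factorial : ℚ)⁻¹) * ascPochhammer ℚ j
    with hq
  have hpev : ∀ x : ℚ, p.eval x = (r.factorial : ℚ)⁻¹ * (ascPochhammer ℚ r).eval ((m : ℚ) * x) := by
    intro x; simp [hp]
  have hqev : ∀ x : ℚ, q.eval x =
      ∑ j ∈ Finset.Icc 1 r, (α j : ℚ) * (j.factorial : ℚ)⁻¹ * (ascPochhammer ℚ j).eval x := by
    intro x; simp [hq, eval_finset_sum]
  have hpq : p = q := by
    have hroots : { x : ℚ | IsRoot (p - q) x }.Infinite := by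
      have hinj : Function.Injective (fun n : ℕ => ((n + 1 : ℕ) : ℚ)) := by
        intro a b hab
        have : ((a + 1 : ℕ) : ℚ) = ((b + 1 : ℕ) : ℚ) := hab
        have := Nat.cast_injective (R := ℚ) this
        omega
      apply Set.infinite_of_injective_forall_mem hinj
      intro n
      simp only [Set.mem_setOf_eq, IsRoot, eval_sub, sub_eq_zero]
      rw [hpev, hqev]
      have h1 : (m : ℚ) * ((n + 1 : ℕ) : ℚ) = ((m * (n + 1) : ℕ) : ℚ) := by push_cast; ring
      rw [h1, ← ascPochhammer_eval_cast, ascPochhammer_nat_eq_descFactorial,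
        Nat.descFactorial_eq_factorial_mul_choose]
      have h2 : ∀ j ∈ Finset.Icc 1 r,
          (α j : ℚ) * (j.factorial : ℚ)⁻¹ * (ascPochhammer ℚ j).eval ((n + 1 : ℕ) : ℚ)
            = (α j : ℚ) * (((n + 1) + j - 1).choose j : ℚ) := by
        intro j hj
        rw [← ascPochhammer_eval_cast, ascPochhammer_nat_eq_descFactorial,
          Nat.descFactorial_eq_factorial_mul_choose]
        have hjf : (j.factorial : ℚ) ≠ 0 := by exact_mod_cast j.factorial_ne_zero
        push_cast
        field_simp
      rw [Finset.sum_congr rfl h2]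
      have hrf : (r.factorial : ℚ) ≠ 0 := by exact_mod_cast r.factorial_ne_zero
      push_cast
      rw [inv_mul_cancel_left₀ hrf]
      exact_mod_cast hα (n + 1) (by omega)
    have := Polynomial.eq_zero_of_infinite_isRoot (p - q) hroots
    linear_combination (norm := ring_nf) this
  intro k
  have hev := congrArg (Polynomial.eval (-(k : ℚ))) hpq
  rw [hpev, hqev] at hev
  have h1 : (m : ℚ) * (-(k : ℚ)) = -(((m * k : ℕ) : ℚ)) := by push_cast; ring
  rw [h1, ascPochhammer_eval_neg_eq_descPochhammer,
    descPochhammer_eval_eq_descFactorial, Nat.descFactorial_eq_factorial_mul_choose] at hev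
  have h2 : ∀ j ∈ Finset.Icc 1 r,
      (α j : ℚ) * (j.factorial : ℚ)⁻¹ * (ascPochhammer ℚ j).eval (-(k : ℚ))
        = (α j : ℚ) * (-1 : ℚ) ^ j * (k.choose j : ℚ) := by
    intro j hj
    rw [ascPochhammer_eval_neg_eq_descPochhammer, descPochhammer_eval_eq_descFactorial,
      Nat.descFactorial_eq_factorial_mul_choose]
    have hjf : (j.factorial : ℚ) ≠ 0 := by exact_mod_cast j.factorial_ne_zero
    field_simp
    push_cast; ring
  rw [Finset.sum_congr rfl h2] at hev
  have hrf : (r.factorial : ℚ) ≠ 0 := by exact_mod_cast r.factorial_ne_zero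
  have hfin : ((-1 : ℚ)) ^ r * ((m * k).choose r : ℚ)
      = ∑ j ∈ Finset.Icc 1 r, (α j : ℚ) * (-1 : ℚ) ^ j * (k.choose j : ℚ) := by
    rw [← hev]
    field_simp
    push_cast; ring
  exact_mod_cast hfin

theorem mu_dvd_alpha (m r i : ℕ) (hm : 2 ≤ m) (hr : 2 ≤ r) (hi1 : 1 ≤ i) (hir : i ≤ r)
    (α : ℕ → ℤ)
    (hα : ∀ n : ℕ, 1 ≤ n →
      ((m * n + r - 1).choose r : ℤ) =
        ∑ j ∈ Finset.Icc 1 r, α j * ((n + j - 1).choose j)) :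
    ((m * i / Nat.gcd (m * i) r : ℕ) : ℤ) ∣ α i ∧
      ((m / Nat.gcd m r : ℕ) : ℤ) ∣ α i := by
  have key := keyNegAux m r (by omega) (by omega) α hα
  -- inversion formula
  have hformula : (-1 : ℤ) ^ i * α i
      = ∑ k ∈ range (i + 1),
          (-1 : ℤ) ^ (i - k) * (i.choose k) * ((-1 : ℤ) ^ r * ((m * k).choose r : ℤ)) := by
    have h1 : ∀ k ∈ range (i + 1),
        (-1 : ℤ) ^ (i - k) * (i.choose k) * ((-1 : ℤ) ^ r * ((m * k).choose r : ℤ))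
          = ∑ j ∈ Finset.Icc 1 r,
              (α j * (-1 : ℤ) ^ j) * ((-1 : ℤ) ^ (i - k) * (i.choose k) * (k.choose j)) := by
      intro k hk
      rw [key k, Finset.mul_sum]
      exact Finset.sum_congr rfl fun j hj => by ring
    rw [Finset.sum_congr rfl h1, Finset.sum_comm]
    have h2 : ∀ j ∈ Finset.Icc 1 r,
        (∑ k ∈ range (i + 1),
          (α j * (-1 : ℤ) ^ j) * ((-1 : ℤ) ^ (i - k) * (i.choose k) * (k.choose j)))
          = (α j * (-1 : ℤ) ^ j) * (if j = i then 1 else 0) := by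
      intro j hj
      rw [← Finset.mul_sum, innerSumAux]
    rw [Finset.sum_congr rfl h2]
    rw [Finset.sum_eq_single_of_mem i (by simp only [Finset.mem_Icc]; omega)
      (fun b hb hbne => by simp [hbne])]
    simp [mul_comm]
  -- divisibility by m * i of r * α i
  have hdvd : ((m * i : ℕ) : ℤ) ∣ (r : ℤ) * α i := by
    have hsub : Ico 1 (i + 1) ⊆ range (i + 1) := by
      intro x hx; simp only [mem_Ico, mem_range] at *; omega
    have hstep : (r : ℤ) * ((-1 : ℤ) ^ i * α i)
        = ((m : ℤ) * i) * ∑ k ∈ Ico 1 (i + 1),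
            (-1 : ℤ) ^ (i - k) * (-1 : ℤ) ^ r * ((i - 1).choose (k - 1))
              * ((m * k - 1).choose (r - 1)) := by
      rw [hformula, Finset.mul_sum, Finset.mul_sum]
      rw [← Finset.sum_subset hsub (by
        intro x hx hx'
        simp only [mem_Ico, mem_range] at hx hx'
        have hx0 : x = 0 := by omega
        subst hx0
        rw [Nat.mul_zero, Nat.choose_eq_zero_of_lt (by omega : 0 < r)]
        push_cast; ring)]
      apply Finset.sum_congr rfl
      intro k hk
      simp only [mem_Ico] at hk
      have e1 : (r : ℤ) * ((m * k).choose r : ℤ) = ((m * k : ℕ) : ℤ) * ((m * k - 1).choose (r - 1)) :=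
        rchooseAux (m * k) r (by omega)
      have e2 : (k : ℤ) * (i.choose k : ℤ) = (i : ℤ) * ((i - 1).choose (k - 1)) :=
        rchooseAux i k (by omega)
      have : ((m * k : ℕ) : ℤ) = (m : ℤ) * k := by push_cast; ring
      rw [this] at e1
      calc (r : ℤ) * ((-1 : ℤ) ^ (i - k) * (i.choose k) * ((-1 : ℤ) ^ r * ((m * k).choose r : ℤ)))
          = (-1 : ℤ) ^ (i - k) * (-1 : ℤ) ^ r * (i.choose k)
              * ((r : ℤ) * ((m * k).choose r : ℤ)) := by ring
        _ = (-1 : ℤ) ^ (i - k) * (-1 : ℤ) ^ r * (m : ℤ)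
              * ((k : ℤ) * (i.choose k : ℤ)) * ((m * k - 1).choose (r - 1)) := by
            rw [e1]; ring
        _ = (-1 : ℤ) ^ (i - k) * (-1 : ℤ) ^ r * (m : ℤ)
              * ((i : ℤ) * ((i - 1).choose (k - 1))) * ((m * k - 1).choose (r - 1)) := by
            rw [e2]
        _ = ((m : ℤ) * i) * ((-1 : ℤ) ^ (i - k) * (-1 : ℤ) ^ r * ((i - 1).choose (k - 1))
              * ((m * k - 1).choose (r - 1))) := by ring
    have hd1 : ((m * i : ℕ) : ℤ) ∣ (r : ℤ) * ((-1 : ℤ) ^ i * α i) := by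
      rw [hstep]
      refine ⟨∑ k ∈ Ico 1 (i + 1), (-1 : ℤ) ^ (i - k) * (-1 : ℤ) ^ r
        * ((i - 1).choose (k - 1)) * ((m * k - 1).choose (r - 1)), ?_⟩
      push_cast; ring
    have hsq : ((-1 : ℤ) ^ i) * ((-1 : ℤ) ^ i) = 1 := by
      rw [← pow_add]; exact Even.neg_one_pow ⟨i, by omega⟩
    have : (r : ℤ) * α i = (-1 : ℤ) ^ i * ((r : ℤ) * ((-1 : ℤ) ^ i * α i)) := by
      calc (r : ℤ) * α i = (((-1 : ℤ) ^ i) * ((-1 : ℤ) ^ i)) * ((r : ℤ) * α i) := by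
            rw [hsq, one_mul]
        _ = (-1 : ℤ) ^ i * ((r : ℤ) * ((-1 : ℤ) ^ i * α i)) := by ring
    rw [this]
    exact hd1.mul_left _
  -- gcd argument
  set d := Nat.gcd (m * i) r with hd
  have hd0 : 0 < d := Nat.gcd_pos_of_pos_right _ (by omega)
  have hda : d ∣ m * i := Nat.gcd_dvd_left _ _
  have hdb : d ∣ r := Nat.gcd_dvd_right _ _
  have cop : Nat.Coprime (m * i / d) (r / d) := Nat.coprime_div_gcd_div_gcd hd0
  have hmain : ((m * i / d : ℕ) : ℤ) ∣ α i := by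
    have e1 : ((m * i : ℕ) : ℤ) = (d : ℤ) * ((m * i / d : ℕ) : ℤ) := by
      exact_mod_cast congrArg (Nat.cast (R := ℤ)) (Nat.mul_div_cancel' hda).symm
    have e2 : ((r : ℕ) : ℤ) = (d : ℤ) * ((r / d : ℕ) : ℤ) := by
      exact_mod_cast congrArg (Nat.cast (R := ℤ)) (Nat.mul_div_cancel' hdb).symm
    have hdvd' : (d : ℤ) * ((m * i / d : ℕ) : ℤ) ∣ (d : ℤ) * (((r / d : ℕ) : ℤ) * α i) := by
      rw [← e1, ← mul_assoc, ← e2]; exact hdvd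
    have hdz : (d : ℤ) ≠ 0 := by exact_mod_cast hd0.ne'
    have h3 : ((m * i / d : ℕ) : ℤ) ∣ ((r / d : ℕ) : ℤ) * α i :=
      (mul_dvd_mul_iff_left hdz).mp hdvd'
    have hcop : IsCoprime ((m * i / d : ℕ) : ℤ) ((r / d : ℕ) : ℤ) :=
      Nat.isCoprime_iff_coprime.mpr cop
    exact hcop.dvd_of_dvd_mul_left h3
  refine ⟨hmain, ?_⟩
  -- m / gcd m r divides m * i / gcd (m*i) r
  set e := Nat.gcd m r with he
  have he0 : 0 < e := Nat.gcd_pos_of_pos_right _ (by omega)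
  have hem : e ∣ m := Nat.gcd_dvd_left _ _
  have hdei : d ∣ e * i := by
    have h1 : d ∣ Nat.gcd (m * i) (r * i) :=
      Nat.dvd_gcd hda (hdb.mul_right i)
    rwa [Nat.gcd_mul_right] at h1
  have heq : m * i / d = (m / e) * (e * i / d) := by
    rw [Nat.div_mul_div_comm hem hdei]
    rw [show m * (e * i) = (m * i) * e by ring, show e * d = d * e by ring]
    rw [Nat.mul_div_mul_right _ _ he0]
  have : (m / e : ℕ) ∣ (m * i / d : ℕ) := ⟨e * i / d, heq⟩
  exact dvd_trans (by exact_mod_cast this) hmain
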